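/- arXiv:math/0408088 — 3 statements merged into one kernel-verified Lean document; each statement's English description precedes it below -/
import Mathlib

section
/- In characteristic 0, the distinct partitions μ of n−1 obtained by removing a removable node from λ have pairwise distinct values E(μ); equivalently, the m eigenvalues E(λ↓_u), u = 1..m, of E_{n−1} on the restriction of S^λ to Σ_{n−1} are distinct. -/
/-- `l` is the list of parts of a partition of `n`. -/
def IsPartition (n : ℕ) (l : List ℕ) : Prop :=
  l.Pairwise (· ≥ ·) ∧ (∀ x ∈ l, 0 < x) ∧ l.sum = n

/-- row `r` (0-indexed) of the Young diagram of `l` ends in a removable node. -/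
def Removable (l : List ℕ) (r : ℕ) : Prop :=
  r < l.length ∧ l.getD (r + 1) 0 < l.getD r 0

/-- a node can be added at the end of row `u` (0-indexed) of the Young diagram of `l`. -/
def Addable (l : List ℕ) (u : ℕ) : Prop :=
  u ≤ l.length ∧ (u = 0 ∨ l.getD u 0 < l.getD (u - 1) 0)

/-- the partition obtained from `l` by removing the removable node in row `r`. -/
def removeNode (l : List ℕ) (r : ℕ) : List ℕ := l.set r (l.getD r 0 - 1)

/-- the partition obtained from `l` by adding the addable node in row `u`. -/
def addNode (l : List ℕ) (u : ℕ) : List ℕ :=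
  if u < l.length then l.set u (l.getD u 0 + 1) else l ++ [1]

/-- The (0-indexed) cells of the Young diagram of `l`. -/
def cells (l : List ℕ) : Finset (ℕ × ℕ) :=
  (Finset.range l.length).biUnion (fun r => (Finset.range (l.getD r 0)).image (fun c => (r, c)))

/-- The sum of the contents (residues) `c - r` over the cells of `[l]`. -/
def contentSum (l : List ℕ) : ℤ := ∑ p ∈ cells l, ((p.2 : ℤ) - (p.1 : ℤ))

lemma contentSum_eq (l : List ℕ) :
    contentSum l = ∑ i ∈ Finset.range l.length,
      ∑ c ∈ Finset.range (l.getD i 0), ((c : ℤ) - (i : ℤ)) := by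
  rw [contentSum, cells, Finset.sum_biUnion]
  · apply Finset.sum_congr rfl
    intro i _
    rw [Finset.sum_image]
    intro a _ b _ h
    simpa using h
  · intro a _ b _ hab
    simp only [Finset.disjoint_left, Finset.mem_image, Finset.mem_range]
    rintro ⟨x, y⟩ ⟨c, hc, h1⟩ ⟨c', hc', h2⟩
    apply hab
    simp [Prod.ext_iff] at h1 h2
    omega

lemma contentSum_removeNode (l : List ℕ) (r : ℕ) (hr : Removable l r) :
    contentSum (removeNode l r) = contentSum l - ((l.getD r 0 : ℤ) - 1 - r) := by
  obtain ⟨hrl, hrlt⟩ := hr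
  have hpos : 0 < l.getD r 0 := lt_of_le_of_lt (Nat.zero_le _) hrlt
  have hlen : (removeNode l r).length = l.length := List.length_set ..
  have hget : ∀ i, i ≠ r → (removeNode l r).getD i 0 = l.getD i 0 := by
    intro i h
    simp [removeNode, List.getD_eq_getElem?_getD, List.getElem?_set_ne (Ne.symm h)]
  have hgetr : (removeNode l r).getD r 0 = l.getD r 0 - 1 := by
    simp [removeNode, List.getD_eq_getElem?_getD]
    rw [List.getElem?_set_self hrl]
    simp [List.getD_eq_getElem?_getD]
  rw [contentSum_eq, contentSum_eq, hlen]
  rw [← Finset.add_sum_erase _ _ (Finset.mem_range.mpr hrl),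
      ← Finset.add_sum_erase _ (fun i => ∑ c ∈ Finset.range (l.getD i 0), ((c : ℤ) - (i : ℤ)))
        (Finset.mem_range.mpr hrl)]
  have h2 : ∀ i ∈ (Finset.range l.length).erase r,
      (∑ c ∈ Finset.range ((removeNode l r).getD i 0), ((c : ℤ) - (i : ℤ)))
      = ∑ c ∈ Finset.range (l.getD i 0), ((c : ℤ) - (i : ℤ)) := by
    intro i hi
    rw [hget i (Finset.ne_of_mem_erase hi)]
  rw [Finset.sum_congr rfl h2, hgetr]
  have : l.getD r 0 = (l.getD r 0 - 1) + 1 := (Nat.succ_pred_eq_of_pos hpos).symm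
  rw [this, Finset.sum_range_succ]
  push_cast [Nat.cast_sub hpos]
  ring

lemma getD_anti (l : List ℕ) (hs : l.Pairwise (· ≥ ·)) {i j : ℕ} (hij : i ≤ j)
    (hj : j < l.length) : l.getD j 0 ≤ l.getD i 0 := by
  have hi : i < l.length := lt_of_le_of_lt hij hj
  rw [l.getD_eq_getElem 0 hj, l.getD_eq_getElem 0 hi]
  rcases eq_or_lt_of_le hij with h | h
  · subst h; rfl
  · exact List.pairwise_iff_getElem.mp hs i j hi hj h

lemma content_lt (l : List ℕ) (hs : l.Pairwise (· ≥ ·)) {r r' : ℕ}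
    (hr : Removable l r) (hr' : Removable l r') (h : r < r') :
    (l.getD r' 0 : ℤ) - 1 - r' < (l.getD r 0 : ℤ) - 1 - r := by
  have h1 : l.getD r' 0 ≤ l.getD (r + 1) 0 := getD_anti l hs h hr'.1
  have h2 := hr.2
  have := hr'.2
  omega

/-- (Characteristic zero.) The partitions of `n - 1` obtained by
removing distinct removable nodes from `l` have pairwise distinct (integer) content
sums; these are the eigenvalues of `E_{n-1}` on the restriction of `S^l`. -/
theorem contentSum_removeNode_injective (n : ℕ) (l : List ℕ) (hl : IsPartition n l)
    (r r' : ℕ) (hr : Removable l r) (hr' : Removable l r') (hne : r ≠ r') :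
    contentSum (removeNode l r) ≠ contentSum (removeNode l r') := by
  rw [contentSum_removeNode l r hr, contentSum_removeNode l r' hr']
  rcases lt_or_gt_of_ne hne with h | h
  · have := content_lt l hl.1 hr hr' h
    omega
  · have := content_lt l hl.1 hr' hr h
    omega
end

section
/- Let M be a module over a ring, z an endomorphism of M, and 0 = M₀ ⊂ M₁ ⊂ ... ⊂ M_m = M a filtration by z-invariant submodules such that z acts as the scalar z_u on M_u/M_{u−1}. If the minimal polynomial of z on M has degree m, then there exists τ ∈ M such that for every u ∈ {1,...,m}, the vector τ·∏_{i=u+1}^m (z − z_i) lies in M_u but not in M_{u−1}. -/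
open Polynomial DirectSum




/-- Existence of a vector whose annihilator is generated by the minimal polynomial. -/
lemma exists_max_order (F V : Type) [Field F] [AddCommGroup V] [Module F V]
    [FiniteDimensional F V] (z : Module.End F V) :
    ∃ τ : V, ∀ p : F[X], Polynomial.aeval z p τ = 0 → minpoly F z ∣ p := by
  have hnz : minpoly F z ≠ 0 := minpoly.ne_zero_of_finite F z
  have htor : Module.IsTorsion F[X] (Module.AEval' z) := by
    intro x
    refine ⟨⟨minpoly F z, mem_nonZeroDivisors_of_ne_zero hnz⟩, ?_⟩
    apply (Module.AEval'.of z).symm.injective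
    rw [Submonoid.smul_def, Module.AEval.of_symm_smul]
    simp [minpoly.aeval]
  obtain ⟨ι, _, p, hp, e, ⟨eqv⟩⟩ := Module.equiv_directSum_of_isTorsion (R := F[X])
    (M := Module.AEval' z) htor
  classical
  set x : ⨁ i : ι, F[X] ⧸ Submodule.span F[X] {p i ^ e i} :=
    ∑ i : ι, DirectSum.of _ i (Submodule.Quotient.mk 1) with hx
  have hcomp : ∀ i, x i = Submodule.Quotient.mk 1 := by
    intro i
    rw [hx, DFinsupp.finset_sum_apply]
    have h1 : ∀ j ∈ Finset.univ, j ≠ i →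
        ((DirectSum.of (fun i => F[X] ⧸ Submodule.span F[X] {p i ^ e i}) j)
          (Submodule.Quotient.mk 1)) i = 0 :=
      fun j _ hj => DirectSum.of_eq_of_ne j i _ hj.symm
    rw [Finset.sum_eq_single_of_mem i (Finset.mem_univ i) h1]
    exact DirectSum.of_eq_same _ _
  have hkill : ∀ q : F[X], q • x = 0 → ∀ y : (⨁ i : ι, F[X] ⧸ Submodule.span F[X] {p i ^ e i}),
      q • y = 0 := by
    intro q hq y
    have hmem : ∀ i, q ∈ Submodule.span F[X] {p i ^ e i} := by
      intro i
      have := congrFun (congrArg DFunLike.coe hq) i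
      rw [DirectSum.smul_apply, hcomp i] at this
      rw [← Submodule.Quotient.mk_smul, smul_eq_mul, mul_one] at this
      exact (Submodule.Quotient.mk_eq_zero _).mp this
    refine DFunLike.ext _ _ fun i => ?_
    obtain ⟨r, hr⟩ := Submodule.Quotient.mk_surjective _ (y i)
    rw [DirectSum.smul_apply, ← hr, ← Submodule.Quotient.mk_smul, DirectSum.zero_apply,
      Submodule.Quotient.mk_eq_zero]
    obtain ⟨a, ha⟩ := Submodule.mem_span_singleton.mp (hmem i)
    exact Submodule.mem_span_singleton.mpr ⟨a * r, by simp only [smul_eq_mul] at ha ⊢; rw [← ha]; ring⟩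
  refine ⟨(Module.AEval'.of z).symm (eqv.symm x), fun q hq => ?_⟩
  have h1 : q • eqv.symm x = 0 := by
    apply (Module.AEval'.of z).symm.injective
    rw [Module.AEval.of_symm_smul]
    simpa [Module.End.smul_def] using hq
  have h2 : q • x = 0 := by
    have := congrArg eqv h1
    rwa [map_smul, eqv.apply_symm_apply, map_zero] at this
  have h3 : ∀ w : Module.AEval' z, q • w = 0 := by
    intro w
    have := congrArg eqv.symm (hkill q h2 (eqv w))
    rwa [map_smul, eqv.symm_apply_apply, map_zero] at this
  apply minpoly.dvd
  ext v
  have := congrArg (Module.AEval'.of z).symm (h3 (Module.AEval'.of z v))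
  rw [Module.AEval.of_symm_smul] at this
  simpa [Module.End.smul_def] using this

/-- The product `∏_{i=a+1}^{b} (z - c i)` maps `M b` into `M a`. -/
lemma prod_maps_down (F V : Type) [Field F] [AddCommGroup V] [Module F V]
    (m : ℕ) (M : ℕ → Submodule F V) (z : Module.End F V) (c : ℕ → F)
    (hscal : ∀ u < m, ∀ v ∈ M (u + 1), z v - c (u + 1) • v ∈ M u)
    (a b : ℕ) (hab : a ≤ b) (hbm : b ≤ m) :
    ∀ v ∈ M b, (Polynomial.aeval z (∏ i ∈ Finset.Icc (a + 1) b, (X - C (c i)))) v ∈ M a := by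
  induction b, hab using Nat.le_induction with
  | base =>
    intro v hv
    rw [Finset.Icc_eq_empty (by omega), Finset.prod_empty]
    simpa using hv
  | succ b hab ih =>
    intro v hv
    rw [Finset.prod_Icc_succ_top (by omega), map_mul, Module.End.mul_apply]
    refine ih (by omega) _ ?_
    have h1 : (Polynomial.aeval z (X - C (c (b + 1)))) v = z v - c (b + 1) • v := by
      simp [Module.algebraMap_end_apply]
    rw [h1]
    exact hscal b (by omega) v hv

/-- Let `M` be a finite-dimensional `F`-vector space, `z` an
endomorphism, and `0 = M₀ ⊂ M₁ ⊂ ⋯ ⊂ M_m = M` a filtration by `z`-invariant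
subspaces on whose successive quotients `z` acts as the scalar `c u`. If the
minimal polynomial of `z` has degree `m`, then there is `τ ∈ M` such that for
every `1 ≤ u ≤ m` the vector `τ·∏_{i=u+1}^m (z - c i)` lies in `M_u ∖ M_{u-1}`. -/
theorem exists_tau (F V : Type) [Field F] [AddCommGroup V] [Module F V]
    [FiniteDimensional F V] (m : ℕ) (M : ℕ → Submodule F V)
    (z : Module.End F V) (c : ℕ → F)
    (hM0 : M 0 = ⊥) (hMm : M m = ⊤)
    (hlt : ∀ u < m, M u < M (u + 1))
    (hinv : ∀ u ≤ m, ∀ v ∈ M u, z v ∈ M u)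
    (hscal : ∀ u < m, ∀ v ∈ M (u + 1), z v - c (u + 1) • v ∈ M u)
    (hdeg : (minpoly F z).natDegree = m) :
    ∃ τ : V, ∀ u, 1 ≤ u → u ≤ m →
      (Polynomial.aeval z (∏ i ∈ Finset.Icc (u + 1) m, (X - C (c i)))) τ ∈ M u ∧
      (Polynomial.aeval z (∏ i ∈ Finset.Icc (u + 1) m, (X - C (c i)))) τ ∉ M (u - 1) := by
  obtain ⟨τ, hτ⟩ := exists_max_order F V z
  refine ⟨τ, fun u hu1 hum => ⟨?_, ?_⟩⟩
  · exact prod_maps_down F V m M z c hscal u m hum le_rfl τ (hMm ▸ Submodule.mem_top)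
  · intro hbad
    -- apply the first u-1 factors to land in M 0 = ⊥
    have h0 : (Polynomial.aeval z (∏ i ∈ Finset.Icc 1 (u - 1), (X - C (c i))))
        ((Polynomial.aeval z (∏ i ∈ Finset.Icc (u + 1) m, (X - C (c i)))) τ) ∈ M 0 :=
      prod_maps_down F V m M z c hscal 0 (u - 1) (by omega) (by omega) _ hbad
    rw [hM0, Submodule.mem_bot] at h0
    have h0' : (Polynomial.aeval z
        ((∏ i ∈ Finset.Icc 1 (u - 1), (X - C (c i))) *
          ∏ i ∈ Finset.Icc (u + 1) m, (X - C (c i)))) τ = 0 := by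
      rw [map_mul, Module.End.mul_apply]; exact h0
    have hdvd := hτ _ h0'
    set P := (∏ i ∈ Finset.Icc 1 (u - 1), (X - C (c i))) *
      ∏ i ∈ Finset.Icc (u + 1) m, (X - C (c i)) with hP
    have hmonic : P.Monic := by
      exact ((monic_prod_of_monic _ _ fun i _ => monic_X_sub_C (c i)).mul
        (monic_prod_of_monic _ _ fun i _ => monic_X_sub_C (c i)))
    have hdeg' : P.natDegree = m - 1 := by
      rw [hP, natDegree_mul (monic_prod_of_monic _ _ fun i _ => monic_X_sub_C (c i)).ne_zero
        (monic_prod_of_monic _ _ fun i _ => monic_X_sub_C (c i)).ne_zero,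
        natDegree_prod _ _ (fun i _ => X_sub_C_ne_zero (c i)),
        natDegree_prod _ _ (fun i _ => X_sub_C_ne_zero (c i))]
      simp [natDegree_X_sub_C, Nat.card_Icc]
      omega
    have := natDegree_le_of_dvd hdvd hmonic.ne_zero
    omega
end

section
/- Let t be a λ-tableau and i = t_{r,c} its entry at node (r, c). In the Specht module S^λ, the polytabloid e_t satisfies e_t · Σ_j (i, j) = (c − r)·e_t, where j ranges over all entries of t lying in columns strictly to the left of column c, together with the entries strictly above i in column c. -/
open Finsupp Equiv

/-- A `l`-tableau with entries in `Fin n`. -/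
def IsTableau (n : ℕ) (l : List ℕ) (t : ℕ × ℕ → Fin n) : Prop :=
  Set.BijOn t (cells l) Set.univ

/-- the row in which symbol `x` appears in the tableau `t`. -/
def rowOf (n : ℕ) (l : List ℕ) (t : ℕ × ℕ → Fin n) (x : Fin n) : ℕ :=
  ((cells l).filter (fun p => t p = x)).sup (fun p => p.1)

/-- the column in which symbol `x` appears in the tableau `t`. -/
def colOf (n : ℕ) (l : List ℕ) (t : ℕ × ℕ → Fin n) (x : Fin n) : ℕ :=
  ((cells l).filter (fun p => t p = x)).sup (fun p => p.2)

/-- the tabloid (row function) of the tableau `t`. -/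
def rowTab (n : ℕ) (l : List ℕ) (t : ℕ × ℕ → Fin n) : Fin n → ℕ :=
  fun x => rowOf n l t x

/-- the column stabilizer of the tableau `t`. -/
def colStab (n : ℕ) (l : List ℕ) (t : ℕ × ℕ → Fin n) : Finset (Perm (Fin n)) :=
  Finset.univ.filter (fun π => ∀ p ∈ cells l, colOf n l t (π (t p)) = p.2)

/-- the polytabloid of the tableau `t`. -/
noncomputable def polytabloid (F : Type) [Field F] (n : ℕ) (l : List ℕ) (t : ℕ × ℕ → Fin n) : (Fin n → ℕ) →₀ F :=
  ∑ π ∈ colStab n l t,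
    ((Equiv.Perm.sign π : ℤ) : F) • Finsupp.single (rowTab n l (fun p => π (t p))) (1 : F)

/-- The Specht module `S^l`, as the span of the polytabloids inside the tabloid space. -/
noncomputable def SpechtSub (F : Type) [Field F] (n : ℕ) (l : List ℕ) : Submodule F ((Fin n → ℕ) →₀ F) :=
  Submodule.span F {v | ∃ t, IsTableau n l t ∧ v = polytabloid F n l t}

/-- action of `Perm (Fin n)` on row functions (tabloids). -/
instance permArrow (n : ℕ) : MulAction (Perm (Fin n)) (Fin n → ℕ) where
  smul π T := fun x => T (π⁻¹ x)
  one_smul _ := rfl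
  mul_smul _ _ _ := rfl

/-- the permutation representation of `Perm (Fin n)` on the space of tabloids. -/
noncomputable def rho (F : Type) [Field F] (n : ℕ) : Representation F (Perm (Fin n)) ((Fin n → ℕ) →₀ F) :=
  { toFun := fun g => Finsupp.lmapDomain F F (g • ·)
    map_one' := by ext; simp
    map_mul' := fun x y => by ext; simp [mul_smul] }

/-- the sum of all transpositions in the group algebra of `Perm (Fin n)`. -/
noncomputable def transpSum (F : Type) [Field F] (n : ℕ) : MonoidAlgebra F (Perm (Fin n)) :=
  ∑ p ∈ Finset.univ.filter (fun p : Fin n × Fin n => p.1 < p.2),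
    MonoidAlgebra.single (Equiv.swap p.1 p.2) (1 : F)
section aux
variable {n : ℕ} {l : List ℕ} {t : ℕ × ℕ → Fin n}

lemma mem_cells_iff {q : ℕ × ℕ} : q ∈ cells l ↔ q.1 < l.length ∧ q.2 < l.getD q.1 0 := by
  unfold cells
  simp only [Finset.mem_biUnion, Finset.mem_image, Finset.mem_range]
  constructor
  · rintro ⟨r, hr, c, hc, rfl⟩
    exact ⟨hr, hc⟩
  · rintro ⟨h1, h2⟩
    exact ⟨q.1, h1, q.2, h2, rfl⟩

lemma filter_eq_self (ht : IsTableau n l t) {q : ℕ × ℕ} (hq : q ∈ cells l) :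
    (cells l).filter (fun p => t p = t q) = {q} := by
  ext r
  simp only [Finset.mem_filter, Finset.mem_singleton]
  constructor
  · rintro ⟨hr, h⟩
    exact ht.2.1 hr hq h
  · rintro rfl; exact ⟨hq, rfl⟩

lemma rowOf_eq (ht : IsTableau n l t) {q : ℕ × ℕ} (hq : q ∈ cells l) :
    rowOf n l t (t q) = q.1 := by
  unfold rowOf; rw [filter_eq_self ht hq, Finset.sup_singleton]

lemma colOf_eq (ht : IsTableau n l t) {q : ℕ × ℕ} (hq : q ∈ cells l) :
    colOf n l t (t q) = q.2 := by
  unfold colOf; rw [filter_eq_self ht hq, Finset.sup_singleton]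

noncomputable def tInv (n : ℕ) (l : List ℕ) (t : ℕ × ℕ → Fin n) (x : Fin n) : ℕ × ℕ :=
  Function.invFunOn t (cells l) x

lemma tInv_mem (ht : IsTableau n l t) (x : Fin n) : tInv n l t x ∈ cells l := by
  have : ∃ a ∈ (cells l : Set (ℕ × ℕ)), t a = x := ht.2.2 (Set.mem_univ x)
  simpa [tInv] using Function.invFunOn_mem this

lemma t_tInv (ht : IsTableau n l t) (x : Fin n) : t (tInv n l t x) = x := by
  have : ∃ a ∈ (cells l : Set (ℕ × ℕ)), t a = x := ht.2.2 (Set.mem_univ x)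
  simpa [tInv] using Function.invFunOn_eq this

lemma tInv_t (ht : IsTableau n l t) {q : ℕ × ℕ} (hq : q ∈ cells l) :
    tInv n l t (t q) = q :=
  ht.2.1 (by exact_mod_cast tInv_mem ht (t q)) hq (t_tInv ht (t q))

lemma rowOf_tInv (ht : IsTableau n l t) (x : Fin n) : rowOf n l t x = (tInv n l t x).1 := by
  conv_lhs => rw [← t_tInv ht x]
  exact rowOf_eq ht (tInv_mem ht x)

lemma colOf_tInv (ht : IsTableau n l t) (x : Fin n) : colOf n l t x = (tInv n l t x).2 := by
  conv_lhs => rw [← t_tInv ht x]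
  exact colOf_eq ht (tInv_mem ht x)

lemma mem_colStab_iff {π : Perm (Fin n)} :
    π ∈ colStab n l t ↔ ∀ q ∈ cells l, colOf n l t (π (t q)) = q.2 := by
  simp [colStab]

lemma colOf_apply (ht : IsTableau n l t) {π : Perm (Fin n)} (hπ : π ∈ colStab n l t)
    (x : Fin n) : colOf n l t (π x) = colOf n l t x := by
  obtain ⟨q, hq, rfl⟩ : ∃ a ∈ (cells l : Set (ℕ×ℕ)), t a = x := ht.2.2 (Set.mem_univ x)
  rw [mem_colStab_iff.1 hπ q hq, colOf_eq ht hq]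

lemma mem_colStab_of_colOf (ht : IsTableau n l t) {π : Perm (Fin n)}
    (h : ∀ x, colOf n l t (π x) = colOf n l t x) : π ∈ colStab n l t :=
  mem_colStab_iff.2 fun q hq => by rw [h (t q), colOf_eq ht hq]

lemma one_mem_colStab (ht : IsTableau n l t) : (1 : Perm (Fin n)) ∈ colStab n l t :=
  mem_colStab_of_colOf ht fun x => rfl

lemma mul_mem_colStab (ht : IsTableau n l t) {σ π : Perm (Fin n)}
    (hσ : σ ∈ colStab n l t) (hπ : π ∈ colStab n l t) : σ * π ∈ colStab n l t :=
  mem_colStab_of_colOf ht fun x => by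
    rw [Perm.mul_apply, colOf_apply ht hσ, colOf_apply ht hπ]

lemma inv_mem_colStab (ht : IsTableau n l t) {π : Perm (Fin n)}
    (hπ : π ∈ colStab n l t) : π⁻¹ ∈ colStab n l t :=
  mem_colStab_of_colOf ht fun x => by
    conv_rhs => rw [← Perm.eq_inv_iff_eq.1 (rfl : π⁻¹ x = π⁻¹ x), colOf_apply ht hπ]

lemma swap_mem_colStab (ht : IsTableau n l t) {a b : Fin n}
    (hab : colOf n l t a = colOf n l t b) : Equiv.swap a b ∈ colStab n l t :=
  mem_colStab_of_colOf ht fun x => by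
    rcases eq_or_ne x a with rfl | hxa
    · rw [swap_apply_left, hab]
    rcases eq_or_ne x b with rfl | hxb
    · rw [swap_apply_right, hab]
    · rw [swap_apply_of_ne_of_ne hxa hxb]

end aux

section aux2
variable {F : Type} [Field F] {n : ℕ} {l : List ℕ} {t : ℕ × ℕ → Fin n}

-- rowOf of a composed tableau
lemma rowOf_comp (σ : Perm (Fin n)) (u : ℕ × ℕ → Fin n) (x : Fin n) :
    rowOf n l (fun p => σ (u p)) x = rowOf n l u (σ⁻¹ x) := by
  unfold rowOf
  congr 1
  apply Finset.filter_congr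
  intro q _
  simp [Equiv.apply_eq_iff_eq_symm_apply, Perm.inv_def]

lemma rowOf_comp' (τ : Perm (Fin n)) (x : Fin n) :
    rowOf n l (fun p => τ (t p)) x = rowOf n l t (τ⁻¹ x) := rowOf_comp τ t x

lemma smul_rowTab (σ π : Perm (Fin n)) :
    σ • (rowTab n l (fun p => π (t p))) = rowTab n l (fun p => (σ * π) (t p)) := by
  funext x
  show rowTab n l (fun p => π (t p)) (σ⁻¹ x) = _
  simp only [rowTab]
  rw [rowOf_comp' π, rowOf_comp' (σ * π), mul_inv_rev, Perm.mul_apply]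

lemma rho_apply (σ : Perm (Fin n)) :
    rho F n σ (polytabloid F n l t) =
      ∑ π ∈ colStab n l t,
        ((Equiv.Perm.sign π : ℤ) : F) • Finsupp.single (rowTab n l (fun p => (σ * π) (t p))) (1 : F) := by
  unfold polytabloid
  rw [map_sum]
  refine Finset.sum_congr rfl fun π _ => ?_
  rw [map_smul]
  show _ • Finsupp.lmapDomain F F (σ • ·) _ = _
  rw [Finsupp.lmapDomain_apply, Finsupp.mapDomain_single, smul_rowTab]

-- needs aux file lemmas; state with hypotheses as placeholders
lemma rho_colStab (ht : IsTableau n l t)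
    (hone : (1:Perm (Fin n)) ∈ colStab n l t)
    (hmul : ∀ {σ π : Perm (Fin n)}, σ ∈ colStab n l t → π ∈ colStab n l t → σ * π ∈ colStab n l t)
    (hinv : ∀ {π : Perm (Fin n)}, π ∈ colStab n l t → π⁻¹ ∈ colStab n l t)
    {σ : Perm (Fin n)} (hσ : σ ∈ colStab n l t) :
    rho F n σ (polytabloid F n l t) = ((Perm.sign σ : ℤ) : F) • polytabloid F n l t := by
  rw [rho_apply, polytabloid, Finset.smul_sum]
  refine Finset.sum_nbij' (fun π => σ * π) (fun π => σ⁻¹ * π) ?_ ?_ ?_ ?_ ?_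
  · intro π hπ; exact hmul hσ hπ
  · intro π hπ; exact hmul (hinv hσ) hπ
  · intro π _; group
  · intro π _; group
  · intro π hπ
    rw [smul_smul]
    congr 1
    rcases Int.units_eq_one_or (Perm.sign σ) with h | h <;>
      rw [map_mul, h] <;> push_cast <;> ring
end aux2

section main
variable {F : Type} [Field F] {n : ℕ} {l : List ℕ} {t : ℕ × ℕ → Fin n} {p : ℕ × ℕ}

/-- the row of `p`'s symbol in the tabloid of `π • t`, as a cell membership fact. -/
lemma rpi_cell (ht : IsTableau n l t) {π : Perm (Fin n)} (hπ : π ∈ colStab n l t)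
    (hp : p ∈ cells l) {c : ℕ} (hc : c ≤ p.2) :
    (rowOf n l t (π⁻¹ (t p)), c) ∈ cells l := by
  have hk := tInv_mem ht (π⁻¹ (t p))
  have h2 : (tInv n l t (π⁻¹ (t p))).2 = p.2 := by
    rw [← colOf_tInv ht, colOf_apply ht (inv_mem_colStab ht hπ), colOf_eq ht hp]
  rw [rowOf_tInv ht]
  rw [mem_cells_iff] at hk ⊢
  refine ⟨hk.1, ?_⟩
  have := hk.2
  show c < l.getD (tInv n l t (π⁻¹ (t p))).1 0
  omega

lemma tInv_eq_pair (ht : IsTableau n l t) {π : Perm (Fin n)} (hπ : π ∈ colStab n l t)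
    {q : ℕ × ℕ} (hq : q ∈ cells l) :
    tInv n l t (π⁻¹ (t q)) = (rowOf n l t (π⁻¹ (t q)), q.2) := by
  ext
  · exact (rowOf_tInv ht _).symm
  · rw [← colOf_tInv ht, colOf_apply ht (inv_mem_colStab ht hπ), colOf_eq ht hq]

lemma pi_apply_cell (ht : IsTableau n l t) {π : Perm (Fin n)} (hπ : π ∈ colStab n l t)
    {q : ℕ × ℕ} (hq : q ∈ cells l) :
    π (t (rowOf n l t (π⁻¹ (t q)), q.2)) = t q := by
  rw [← tInv_eq_pair ht hπ hq, t_tInv ht, Perm.eq_inv_iff_eq.1 rfl]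

/-- diagonal count -/
lemma diag_card (ht : IsTableau n l t) (hp : p ∈ cells l) {π : Perm (Fin n)}
    (hπ : π ∈ colStab n l t) :
    ((cells l).filter (fun q => q.2 < p.2 ∧
      rowOf n l t (π⁻¹ (t q)) = rowOf n l t (π⁻¹ (t p)))).card = p.2 := by
  set r := rowOf n l t (π⁻¹ (t p)) with hr
  have hset : (cells l).filter (fun q => q.2 < p.2 ∧ rowOf n l t (π⁻¹ (t q)) = r)
      = (Finset.range p.2).image (fun c => tInv n l t (π (t (r, c)))) := by
    ext q
    simp only [Finset.mem_filter, Finset.mem_image, Finset.mem_range]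
    constructor
    · rintro ⟨hq, hq2, hrow⟩
      refine ⟨q.2, hq2, ?_⟩
      rw [← hrow, pi_apply_cell ht hπ hq, tInv_t ht hq]
    · rintro ⟨c, hc, rfl⟩
      have hcell : (r, c) ∈ cells l := rpi_cell ht hπ hp hc.le
      have h1 : t (tInv n l t (π (t (r, c)))) = π (t (r, c)) := t_tInv ht _
      have hrow : rowOf n l t (π⁻¹ (t (tInv n l t (π (t (r, c)))))) = r := by
        rw [h1, Perm.inv_eq_iff_eq.2 rfl, rowOf_eq ht hcell]
      have hcol : (tInv n l t (π (t (r, c)))).2 = c := by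
        rw [← colOf_tInv ht, colOf_apply ht hπ, colOf_eq ht hcell]
      exact ⟨tInv_mem ht _, by rw [hcol]; exact hc, hrow⟩
  rw [hset, Finset.card_image_of_injOn, Finset.card_range]
  intro c1 h1 c2 h2 heq
  simp only [Finset.coe_range, Set.mem_Iio] at h1 h2
  have := congrArg (t ·) heq
  simp only [t_tInv ht] at this
  have := π.injective this
  have := ht.2.1 (rpi_cell ht hπ hp h1.le) (rpi_cell ht hπ hp h2.le) this
  exact congrArg Prod.snd this

/-- if the symbols of `q` and `p` are in the same row of the tabloid of `π t`,
the swap fixes the tabloid. -/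
lemma diag_tab (ht : IsTableau n l t) {π : Perm (Fin n)} {q : ℕ × ℕ}
    (hd : rowOf n l t (π⁻¹ (t q)) = rowOf n l t (π⁻¹ (t p))) :
    rowTab n l (fun c => (Equiv.swap (t p) (t q) * π) (t c))
      = rowTab n l (fun c => π (t c)) := by
  funext x
  simp only [rowTab]
  rw [rowOf_comp' (Equiv.swap (t p) (t q) * π), rowOf_comp' π,
    mul_inv_rev, Perm.mul_apply, swap_inv]
  rcases eq_or_ne x (t p) with rfl | hxp
  · rw [swap_apply_left]; exact hd
  rcases eq_or_ne x (t q) with rfl | hxq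
  · rw [swap_apply_right]; exact hd.symm
  · rw [swap_apply_of_ne_of_ne hxp hxq]

end main

section offdiag
variable {F : Type} [Field F] {n : ℕ} {l : List ℕ} {t : ℕ × ℕ → Fin n} {p : ℕ × ℕ}

lemma off_facts (ht : IsTableau n l t) (hp : p ∈ cells l) {q : ℕ × ℕ} {π : Perm (Fin n)}
    (hq : q ∈ cells l) (hq2 : q.2 < p.2) (hπ : π ∈ colStab n l t)
    (hne : rowOf n l t (π⁻¹ (t q)) ≠ rowOf n l t (π⁻¹ (t p))) :
    (rowOf n l t (π⁻¹ (t p)), q.2) ∈ cells l ∧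
    t q ≠ π (t (rowOf n l t (π⁻¹ (t p)), q.2)) ∧
    t p ≠ t q ∧
    t p ≠ π (t (rowOf n l t (π⁻¹ (t p)), q.2)) ∧
    colOf n l t (π (t (rowOf n l t (π⁻¹ (t p)), q.2))) = q.2 := by
  have F1 : (rowOf n l t (π⁻¹ (t p)), q.2) ∈ cells l := rpi_cell ht hπ hp hq2.le
  have F2 : colOf n l t (π (t (rowOf n l t (π⁻¹ (t p)), q.2))) = q.2 := by
    rw [colOf_apply ht hπ, colOf_eq ht F1]
  have F3 : t q ≠ π (t (rowOf n l t (π⁻¹ (t p)), q.2)) := by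
    intro h
    apply hne
    rw [h, Perm.inv_eq_iff_eq.2 rfl, rowOf_eq ht F1]
  have F4 : t p ≠ t q := by
    intro h
    have h2 := colOf_eq ht hp
    rw [h, colOf_eq ht hq] at h2
    omega
  have F5 : t p ≠ π (t (rowOf n l t (π⁻¹ (t p)), q.2)) := by
    intro h
    have h2 := colOf_eq ht hp
    rw [h, F2] at h2
    omega
  exact ⟨F1, F3, F4, F5, F2⟩

lemma off_sum_zero (ht : IsTableau n l t) (hp : p ∈ cells l) :
    ∑ x ∈ ((cells l).filter (fun q => q.2 < p.2) ×ˢ colStab n l t).filter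
        (fun x => ¬ rowOf n l t (x.2⁻¹ (t x.1)) = rowOf n l t (x.2⁻¹ (t p))),
      (((Perm.sign x.2 : ℤ) : F) •
        Finsupp.single (rowTab n l (fun c => (Equiv.swap (t p) (t x.1) * x.2) (t c))) (1 : F)) = 0 := by
  have hmem : ∀ x : (ℕ × ℕ) × Perm (Fin n),
      x ∈ ((cells l).filter (fun q => q.2 < p.2) ×ˢ colStab n l t).filter
        (fun x => ¬ rowOf n l t (x.2⁻¹ (t x.1)) = rowOf n l t (x.2⁻¹ (t p))) ↔
      x.1 ∈ cells l ∧ x.1.2 < p.2 ∧ x.2 ∈ colStab n l t ∧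
        rowOf n l t (x.2⁻¹ (t x.1)) ≠ rowOf n l t (x.2⁻¹ (t p)) := by
    intro x
    simp only [Finset.mem_filter, Finset.mem_product]
    tauto
  apply Finset.sum_involution (fun (x : (ℕ × ℕ) × Perm (Fin n)) _ =>
    (tInv n l t (x.2 (t (rowOf n l t (x.2⁻¹ (t p)), x.1.2))),
      Equiv.swap (t x.1) (x.2 (t (rowOf n l t (x.2⁻¹ (t p)), x.1.2))) * x.2))
  · -- f a + f (g a) = 0
    rintro ⟨q, π⟩ ha
    obtain ⟨hq, hq2, hπ, hne⟩ := (hmem _).1 ha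
    dsimp only at hq hq2 hπ hne ⊢
    obtain ⟨F1, F3, F4, F5, F2⟩ := off_facts ht hp hq hq2 hπ hne
    have htq' : t (tInv n l t (π (t (rowOf n l t (π⁻¹ (t p)), q.2))))
        = π (t (rowOf n l t (π⁻¹ (t p)), q.2)) := t_tInv ht _
    rw [htq']
    have hsign : ((Perm.sign (Equiv.swap (t q) (π (t (rowOf n l t (π⁻¹ (t p)), q.2))) * π) : ℤ) : F)
        = -((Perm.sign π : ℤ) : F) := by
      rw [map_mul, Perm.sign_swap F3]
      push_cast
      ring
    have htab : rowTab n l (fun c =>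
          (Equiv.swap (t p) (π (t (rowOf n l t (π⁻¹ (t p)), q.2))) *
            (Equiv.swap (t q) (π (t (rowOf n l t (π⁻¹ (t p)), q.2))) * π)) (t c))
        = rowTab n l (fun c => (Equiv.swap (t p) (t q) * π) (t c)) := by
      funext x
      simp only [rowTab]
      rw [rowOf_comp', rowOf_comp']
      simp only [mul_inv_rev, swap_inv, Perm.mul_apply]
      rcases eq_or_ne x (t p) with rfl | hxp
      · rw [swap_apply_left, swap_apply_right, swap_apply_left]
      rcases eq_or_ne x (t q) with rfl | hxq
      · rw [swap_apply_of_ne_of_ne F4.symm F3, swap_apply_left, swap_apply_right,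
          Perm.inv_eq_iff_eq.2 rfl, rowOf_eq ht F1]
      rcases eq_or_ne x (π (t (rowOf n l t (π⁻¹ (t p)), q.2))) with rfl | hxj
      · rw [swap_apply_right, swap_apply_of_ne_of_ne F4 F5,
          swap_apply_of_ne_of_ne F5.symm F3.symm, Perm.inv_eq_iff_eq.2 rfl, rowOf_eq ht F1]
      · rw [swap_apply_of_ne_of_ne hxp hxj, swap_apply_of_ne_of_ne hxq hxj,
          swap_apply_of_ne_of_ne hxp hxq]
    rw [htab, hsign, ← add_smul, add_neg_cancel, zero_smul]
  · -- g a ≠ a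
    rintro ⟨q, π⟩ ha _
    obtain ⟨hq, hq2, hπ, hne⟩ := (hmem _).1 ha
    dsimp only at hq hq2 hπ hne
    obtain ⟨F1, F3, F4, F5, F2⟩ := off_facts ht hp hq hq2 hπ hne
    intro h
    apply F3
    have h1 := congrArg Prod.fst h
    dsimp only at h1
    conv_lhs => rw [← h1]
    exact t_tInv ht _
  · -- g a ∈ s
    rintro ⟨q, π⟩ ha
    obtain ⟨hq, hq2, hπ, hne⟩ := (hmem _).1 ha
    dsimp only at hq hq2 hπ hne
    obtain ⟨F1, F3, F4, F5, F2⟩ := off_facts ht hp hq hq2 hπ hne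
    rw [hmem]
    dsimp only
    have hσ : Equiv.swap (t q) (π (t (rowOf n l t (π⁻¹ (t p)), q.2))) ∈ colStab n l t := by
      apply swap_mem_colStab ht
      rw [colOf_eq ht hq, F2]
    have htq' : t (tInv n l t (π (t (rowOf n l t (π⁻¹ (t p)), q.2))))
        = π (t (rowOf n l t (π⁻¹ (t p)), q.2)) := t_tInv ht _
    have hinvap : ∀ y, (Equiv.swap (t q) (π (t (rowOf n l t (π⁻¹ (t p)), q.2))) * π)⁻¹ y
        = π⁻¹ (Equiv.swap (t q) (π (t (rowOf n l t (π⁻¹ (t p)), q.2))) y) := by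
      intro y
      simp [mul_inv_rev, swap_inv]
    refine ⟨tInv_mem ht _, ?_, mul_mem_colStab ht hσ hπ, ?_⟩
    · have h2 : (tInv n l t (π (t (rowOf n l t (π⁻¹ (t p)), q.2)))).2 = q.2 := by
        rw [← colOf_tInv ht, F2]
      rw [h2]
      exact hq2
    · rw [htq', hinvap, hinvap, swap_apply_right, swap_apply_of_ne_of_ne F4 F5]
      exact hne
  · -- g (g a) = a
    rintro ⟨q, π⟩ ha
    obtain ⟨hq, hq2, hπ, hne⟩ := (hmem _).1 ha
    dsimp only at hq hq2 hπ hne ⊢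
    obtain ⟨F1, F3, F4, F5, F2⟩ := off_facts ht hp hq hq2 hπ hne
    have htq' : t (tInv n l t (π (t (rowOf n l t (π⁻¹ (t p)), q.2))))
        = π (t (rowOf n l t (π⁻¹ (t p)), q.2)) := t_tInv ht _
    have hinvap : ∀ y, (Equiv.swap (t q) (π (t (rowOf n l t (π⁻¹ (t p)), q.2))) * π)⁻¹ y
        = π⁻¹ (Equiv.swap (t q) (π (t (rowOf n l t (π⁻¹ (t p)), q.2))) y) := by
      intro y
      simp [mul_inv_rev, swap_inv]
    have h1 : rowOf n l t ((Equiv.swap (t q) (π (t (rowOf n l t (π⁻¹ (t p)), q.2))) * π)⁻¹ (t p))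
        = rowOf n l t (π⁻¹ (t p)) := by
      rw [hinvap, swap_apply_of_ne_of_ne F4 F5]
    have h2 : (tInv n l t (π (t (rowOf n l t (π⁻¹ (t p)), q.2)))).2 = q.2 := by
      rw [← colOf_tInv ht, F2]
    rw [htq', h1, h2, Perm.mul_apply, swap_apply_right, tInv_t ht hq, swap_comm,
      ← mul_assoc, swap_mul_self, one_mul]

end offdiag

section leftsum
variable {F : Type} [Field F] {n : ℕ} {l : List ℕ} {t : ℕ × ℕ → Fin n} {p : ℕ × ℕ}

lemma left_sum (ht : IsTableau n l t) (hp : p ∈ cells l) :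
    ∑ q ∈ (cells l).filter (fun q => q.2 < p.2),
      rho F n (Equiv.swap (t p) (t q)) (polytabloid F n l t)
    = ((p.2 : ℕ) : F) • polytabloid F n l t := by
  rw [Finset.sum_congr rfl (fun q _ => rho_apply (Equiv.swap (t p) (t q)))]
  rw [← Finset.sum_product' ((cells l).filter (fun q => q.2 < p.2)) (colStab n l t)
    (fun q π => ((Perm.sign π : ℤ) : F) •
      Finsupp.single (rowTab n l (fun c => (Equiv.swap (t p) (t q) * π) (t c))) (1 : F))]
  rw [← Finset.sum_filter_add_sum_filter_not
    ((cells l).filter (fun q => q.2 < p.2) ×ˢ colStab n l t)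
    (fun x => rowOf n l t (x.2⁻¹ (t x.1)) = rowOf n l t (x.2⁻¹ (t p)))]
  rw [off_sum_zero ht hp, add_zero]
  have hcongr : ∀ x ∈ ((cells l).filter (fun q => q.2 < p.2) ×ˢ colStab n l t).filter
      (fun x => rowOf n l t (x.2⁻¹ (t x.1)) = rowOf n l t (x.2⁻¹ (t p))),
      (((Perm.sign x.2 : ℤ) : F) •
        Finsupp.single (rowTab n l (fun c => (Equiv.swap (t p) (t x.1) * x.2) (t c))) (1 : F))
      = ((Perm.sign x.2 : ℤ) : F) •
        Finsupp.single (rowTab n l (fun c => x.2 (t c))) (1 : F) := by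
    rintro ⟨q, π⟩ hx
    rw [Finset.mem_filter] at hx
    rw [diag_tab ht hx.2]
  rw [Finset.sum_congr rfl hcongr]
  rw [Finset.sum_finset_product_right _ (colStab n l t)
    (fun π => (cells l).filter (fun q => q.2 < p.2 ∧
      rowOf n l t (π⁻¹ (t q)) = rowOf n l t (π⁻¹ (t p))))
    (by
      intro x
      simp only [Finset.mem_filter, Finset.mem_product]
      tauto)]
  have hinner : ∀ π ∈ colStab n l t,
      (∑ _q ∈ (cells l).filter (fun q => q.2 < p.2 ∧
          rowOf n l t (π⁻¹ (t q)) = rowOf n l t (π⁻¹ (t p))),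
        ((Perm.sign π : ℤ) : F) • Finsupp.single (rowTab n l (fun c => π (t c))) (1 : F))
      = p.2 • (((Perm.sign π : ℤ) : F) •
          Finsupp.single (rowTab n l (fun c => π (t c))) (1 : F)) := by
    intro π hπ
    rw [Finset.sum_const, diag_card ht hp hπ]
  rw [Finset.sum_congr rfl hinner, ← Finset.smul_sum, polytabloid, Nat.cast_smul_eq_nsmul]

lemma getD_anti_s19 (hs : l.Pairwise (· ≥ ·)) {a b : ℕ} (hab : a ≤ b) (hb : b < l.length) :
    l.getD b 0 ≤ l.getD a 0 := by
  rcases eq_or_lt_of_le hab with rfl | h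
  · exact le_refl _
  · have h2 := hs.rel_get_of_lt (a := ⟨a, lt_of_le_of_lt hab hb⟩) (b := ⟨b, hb⟩) h
    rw [List.getD_eq_getElem l 0 hb, List.getD_eq_getElem l 0 (lt_of_le_of_lt hab hb)]
    exact h2

lemma above_card (hs : l.Pairwise (· ≥ ·)) (hp : p ∈ cells l) :
    ((cells l).filter (fun q => q.2 = p.2 ∧ q.1 < p.1)).card = p.1 := by
  have hp' := mem_cells_iff.1 hp
  have hset : (cells l).filter (fun q => q.2 = p.2 ∧ q.1 < p.1)
      = (Finset.range p.1).image (fun r => (r, p.2)) := by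
    ext q
    simp only [Finset.mem_filter, Finset.mem_image, Finset.mem_range]
    constructor
    · rintro ⟨_, h2, h1⟩
      exact ⟨q.1, h1, by rw [← h2]⟩
    · rintro ⟨r, hr, rfl⟩
      have hrl : r < l.length := lt_trans hr hp'.1
      refine ⟨mem_cells_iff.2 ⟨hrl, ?_⟩, rfl, hr⟩
      exact lt_of_lt_of_le hp'.2 (getD_anti_s19 hs hr.le hp'.1)
  rw [hset, Finset.card_image_of_injOn (fun a _ b _ h => congrArg Prod.fst h), Finset.card_range]

lemma above_sum (ht : IsTableau n l t) (hs : l.Pairwise (· ≥ ·)) (hp : p ∈ cells l) :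
    ∑ q ∈ (cells l).filter (fun q => q.2 = p.2 ∧ q.1 < p.1),
      rho F n (Equiv.swap (t p) (t q)) (polytabloid F n l t)
    = p.1 • ((-1 : F) • polytabloid F n l t) := by
  have hterm : ∀ q ∈ (cells l).filter (fun q => q.2 = p.2 ∧ q.1 < p.1),
      rho F n (Equiv.swap (t p) (t q)) (polytabloid F n l t)
      = (-1 : F) • polytabloid F n l t := by
    intro q hq
    rw [Finset.mem_filter] at hq
    obtain ⟨hqc, h2, h1⟩ := hq
    have hne : t p ≠ t q := by
      intro h
      have := ht.2.1 hp hqc h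
      rw [this] at h1
      omega
    have hσ : Equiv.swap (t p) (t q) ∈ colStab n l t :=
      swap_mem_colStab ht (by rw [colOf_eq ht hp, colOf_eq ht hqc, h2])
    rw [rho_colStab ht (one_mem_colStab ht) (fun h1 h2 => mul_mem_colStab ht h1 h2)
      (fun h1 => inv_mem_colStab ht h1) hσ, Perm.sign_swap hne]
    norm_num
  rw [Finset.sum_congr rfl hterm, Finset.sum_const, above_card hs hp]
end leftsum

/-- Let `t` be a `λ`-tableau with entry `i = t (r, c)` at the
node `(r, c)`. Then the polytabloid satisfies `e_t · ∑_j (i, j) = (c − r) · e_t`,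
where `j` ranges over the entries of `t` in columns strictly left of column `c`
together with the entries strictly above `i` in column `c`. -/
theorem garnir_relation (F : Type) [Field F] (n : ℕ) (l : List ℕ)
    (hl : IsPartition n l) (t : ℕ × ℕ → Fin n) (ht : IsTableau n l t)
    (p : ℕ × ℕ) (hp : p ∈ cells l) :
    ((rho F n).asAlgebraHom
        (∑ q ∈ (cells l).filter (fun q => q.2 < p.2 ∨ (q.2 = p.2 ∧ q.1 < p.1)),
          MonoidAlgebra.single (Equiv.swap (t p) (t q)) (1 : F)))
        (polytabloid F n l t) =
      (((p.2 : ℤ) - (p.1 : ℤ) : ℤ) : F) • polytabloid F n l t := by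
  have hdisj : Disjoint ((cells l).filter (fun q => q.2 < p.2))
      ((cells l).filter (fun q => q.2 = p.2 ∧ q.1 < p.1)) := by
    rw [Finset.disjoint_left]
    intro a ha hb
    rw [Finset.mem_filter] at ha hb
    omega
  rw [map_sum]
  simp only [LinearMap.sum_apply]
  rw [Finset.sum_congr rfl (fun q _ => by
    rw [Representation.asAlgebraHom_single, one_smul])]
  rw [Finset.filter_or, Finset.sum_union hdisj, left_sum ht hp, above_sum ht hl.1 hp,
    ← Nat.cast_smul_eq_nsmul F p.1, smul_smul, ← add_smul]
  congr 1
  push_cast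
  ring
end
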